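/- Let Q ∈ ℝ^{p×q}, R ∈ ℝ^{p×r}, T_1 ∈ ℝ^{p×s}, and T_2 ∈ ℝ^{w×r} be real matrices. Then the following are equivalent: (i) there exists a matrix X ∈ ℝ^{s×w} such that the column space of R + T_1·X·T_2 is contained in the column space of Q; (ii) there exist vectors v_1 ∈ ℝ^{q·r} and v_2 ∈ ℝ^{s·w} such that (I_r ⊗ Q)·v_1 − (T_2ᵀ ⊗ T_1)·v_2 = vec(R). Moreover, for any such pair (v_1, v_2), the matrix X ∈ ℝ^{s×w} with vec(X) = v_2 satisfies the inclusion in (i). -/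

import Mathlib

open scoped Kronecker Matrix

/-- Column-stacking vectorization: `vec(M) (j, i) = M i j` (column-major order). -/
def vecM {α β : Type*} (M : Matrix α β ℝ) : β × α → ℝ := fun ji => M ji.2 ji.1

lemma kron_mulVec_vecM {m n o p' : Type*} [Fintype n] [Fintype p'] [DecidableEq n]
    (A : Matrix m n ℝ) (B : Matrix o p' ℝ) (X : Matrix p' n ℝ) :
    (A ⊗ₖ B).mulVec (vecM X) = vecM (B * X * Aᵀ) := by
  funext ji
  obtain ⟨j, i⟩ := ji
  simp only [Matrix.mulVec, dotProduct, vecM, Matrix.mul_apply,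
    Matrix.kroneckerMap_apply, Fintype.sum_prod_type, Matrix.transpose_apply,
    Finset.sum_mul, Finset.mul_sum]
  apply Finset.sum_congr rfl
  intro l _
  apply Finset.sum_congr rfl
  intro k _
  ring

lemma range_le_iff_exists_factor {p' n q' : ℕ}
    (M : Matrix (Fin p') (Fin n) ℝ) (Q : Matrix (Fin p') (Fin q') ℝ) :
    LinearMap.range M.mulVecLin ≤ LinearMap.range Q.mulVecLin ↔ ∃ Y : Matrix (Fin q') (Fin n) ℝ, M = Q * Y := by
  constructor
  · intro h
    have hc : ∀ j, ∃ y, Q.mulVec y = fun i => M i j := by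
      intro j
      obtain ⟨y, hy⟩ := h ⟨Pi.single j 1, rfl⟩
      refine ⟨y, ?_⟩
      funext i
      have := congrFun hy i
      simpa [Matrix.mulVecLin_apply, Matrix.mulVec, dotProduct,
        Pi.single_apply, Finset.sum_ite_eq'] using this
    choose y hy using hc
    refine ⟨Matrix.of fun k j => y j k, ?_⟩
    ext i j
    have := congrFun (hy j) i
    simpa [Matrix.mul_apply, Matrix.mulVec, dotProduct] using this.symm
  · rintro ⟨Y, rfl⟩
    rw [Matrix.mulVecLin_mul]
    exact LinearMap.range_comp_le_range _ _

lemma vecM_sub {α β : Type*} (A B : Matrix α β ℝ) : vecM (A - B) = vecM A - vecM B := rfl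

/-- There exists `X` with `colspace(R + T₁·X·T₂) ⊆ colspace(Q)` iff
there exist vectors `v₁, v₂` with `(I ⊗ Q)·v₁ − (T₂ᵀ ⊗ T₁)·v₂ = vec(R)`; moreover,
for any such `(v₁, v₂)`, the matrix `X` with `vec(X) = v₂` realizes the inclusion. -/
theorem range_inclusion_iff_kronecker_solvable (p q r s w : ℕ)
    (Q : Matrix (Fin p) (Fin q) ℝ) (R : Matrix (Fin p) (Fin r) ℝ)
    (T₁ : Matrix (Fin p) (Fin s) ℝ) (T₂ : Matrix (Fin w) (Fin r) ℝ) :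
    ((∃ X : Matrix (Fin s) (Fin w) ℝ,
        LinearMap.range (Matrix.mulVecLin (R + T₁ * X * T₂)) ≤
          LinearMap.range (Matrix.mulVecLin Q)) ↔
      ∃ (v₁ : Fin r × Fin q → ℝ) (v₂ : Fin w × Fin s → ℝ),
        ((1 : Matrix (Fin r) (Fin r) ℝ) ⊗ₖ Q).mulVec v₁ -
          (T₂ᵀ ⊗ₖ T₁).mulVec v₂ = vecM R) ∧
    ∀ (v₁ : Fin r × Fin q → ℝ) (v₂ : Fin w × Fin s → ℝ),
      ((1 : Matrix (Fin r) (Fin r) ℝ) ⊗ₖ Q).mulVec v₁ -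
        (T₂ᵀ ⊗ₖ T₁).mulVec v₂ = vecM R →
      LinearMap.range
          (Matrix.mulVecLin (R + T₁ * (Matrix.of fun i j => v₂ (j, i)) * T₂)) ≤
        LinearMap.range (Matrix.mulVecLin Q) := by
  have key : ∀ (v₁ : Fin r × Fin q → ℝ) (v₂ : Fin w × Fin s → ℝ),
      ((1 : Matrix (Fin r) (Fin r) ℝ) ⊗ₖ Q).mulVec v₁ -
        (T₂ᵀ ⊗ₖ T₁).mulVec v₂ = vecM R →
      LinearMap.range
          (Matrix.mulVecLin (R + T₁ * (Matrix.of fun i j => v₂ (j, i)) * T₂)) ≤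
        LinearMap.range (Matrix.mulVecLin Q) := by
    intro v₁ v₂ h
    set X : Matrix (Fin s) (Fin w) ℝ := Matrix.of fun i j => v₂ (j, i) with hX
    set Y : Matrix (Fin q) (Fin r) ℝ := Matrix.of fun k j => v₁ (j, k) with hY
    have hv₁ : v₁ = vecM Y := by funext ji; cases ji; rfl
    have hv₂ : v₂ = vecM X := by funext ji; cases ji; rfl
    rw [hv₁, hv₂, kron_mulVec_vecM, kron_mulVec_vecM, Matrix.transpose_one, Matrix.mul_one,
      Matrix.transpose_transpose, ← vecM_sub] at h
    have hmat : Q * Y - T₁ * X * T₂ = R := by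
      ext i j
      exact congrFun h (j, i)
    rw [(range_le_iff_exists_factor _ _)]
    exact ⟨Y, by rw [← hmat]; abel⟩
  refine ⟨⟨?_, fun ⟨v₁, v₂, h⟩ => ⟨_, key v₁ v₂ h⟩⟩, key⟩
  rintro ⟨X, hX⟩
  obtain ⟨Y, hY⟩ := (range_le_iff_exists_factor _ _).mp hX
  refine ⟨vecM Y, vecM X, ?_⟩
  rw [kron_mulVec_vecM, kron_mulVec_vecM, Matrix.transpose_one, Matrix.mul_one,
    Matrix.transpose_transpose, ← vecM_sub]
  rw [← hY, add_sub_cancel_right]
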